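/- Let β ∈ V_1 ⊖ S_1 and let n ≥ 1 be an integer. Then q_n(h(q_{n+1}(h_n^r β))) = − q_n(h_{n−1}^r β). -/

import Mathlib

noncomputable section

open scoped ComplexInnerProductSpace

namespace UCoxMasa

/-- The universal Coxeter matrix on `Fin L`: all off-diagonal entries are `0` (representing ∞). -/
def Mat (L : ℕ) : CoxeterMatrix (Fin L) where
  M := fun i j => if i = j then 1 else 0
  isSymm := by
    ext i j
    by_cases h : i = j <;> simp [Matrix.transpose, h, eq_comm]
  diagonal := fun i => by simp
  off_diagonal := fun i j h => by simp [h]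

/-- The universal Coxeter group on `L` generators: free product of `L` copies of `ℤ/2ℤ`. -/
abbrev W (L : ℕ) : Type := (Mat L).Group

/-- The distinguished Coxeter system of `W L`. -/
def cs (L : ℕ) : CoxeterSystem (Mat L) (W L) := CoxeterMatrix.toCoxeterSystem (Mat L)

/-- The simple reflection associated to `i : Fin L`. -/
def σ {L : ℕ} (i : Fin L) : W L := (cs L).simple i

/-- Word length on `W L` with respect to the generating set of simple reflections. -/
def len {L : ℕ} (w : W L) : ℕ := (cs L).length w

/-- The Hilbert space `ℓ²(W)`. -/
abbrev H (L : ℕ) : Type := lp (fun _ : W L => ℂ) 2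

/-- The standard orthonormal basis vector `δ_w` of `ℓ²(W)`. -/
def δ {L : ℕ} (w : W L) : H L :=
  letI := Classical.decEq (W L)
  lp.single 2 w 1

/-- `V l`: the linear span of `{δ_w : ℓ(w) = l}`. -/
def V (L : ℕ) (l : ℕ) : Submodule ℂ (H L) :=
  Submodule.span ℂ {x : H L | ∃ w : W L, len w = l ∧ x = δ w}

/-- `S_l`: the linear span of `q_l(h V_{l-1}) ∪ q_l(R_h V_{l-1})`,
given the projections `Q`, the operator `h` and the right operator `Rh`. -/
def Sl (L : ℕ) (Q : ℕ → (H L →L[ℂ] H L)) (h Rh : H L →L[ℂ] H L) (l : ℕ) :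
    Submodule ℂ (H L) :=
  Submodule.span ℂ
    ({x : H L | ∃ y ∈ V L (l - 1), x = Q l (h y)} ∪
      {x : H L | ∃ y ∈ V L (l - 1), x = Q l (Rh y)})

end UCoxMasa


namespace UCoxMasa

/-! ## Auxiliary material: normal forms in the universal Coxeter group -/

variable {L : ℕ}

/-- Lists with no two adjacent equal entries. -/
def NFS (L : ℕ) : Type := {l : List (Fin L) // l.Chain' (· ≠ ·)}

def actFun (i : Fin L) (l : NFS L) : NFS L :=
  if h : l.1.head? = some i then ⟨l.1.tail, l.2.tail⟩
  else ⟨i :: l.1, List.isChain_cons.2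
    ⟨fun b hb hib => h (by rw [Option.mem_def] at hb; rw [hb, hib]), l.2⟩⟩

lemma actFun_involutive (i : Fin L) : Function.Involutive (actFun i) := by
  rintro ⟨l, hl⟩
  apply Subtype.ext
  cases l with
  | nil => simp [actFun]
  | cons a t =>
    by_cases h : i = a
    · subst h
      have h1 : (actFun i ⟨i :: t, hl⟩) = ⟨t, hl.tail⟩ := by
        apply Subtype.ext
        simp [actFun]
      rw [h1]
      have h2 : t.head? ≠ some i := by
        cases t with
        | nil => simp
        | cons b t' =>
          have : i ≠ b := (List.isChain_cons_cons.1 hl).1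
          simpa using fun hba => this hba.symm
      simp [actFun, h2]
    · have h2 : (a :: t).head? ≠ some i := by simpa using fun hai => h hai.symm
      have h3 : a ≠ i := fun hai => h hai.symm
      have h1 : (actFun i ⟨a :: t, hl⟩) = ⟨i :: a :: t, List.isChain_cons_cons.2 ⟨h, hl⟩⟩ := by
        apply Subtype.ext
        simp [actFun, h2, h3]
      rw [h1]
      simp [actFun]

def actPerm (i : Fin L) : Equiv.Perm (NFS L) := (actFun_involutive i).toPerm _

lemma actPerm_liftable : CoxeterMatrix.IsLiftable (Mat L) (fun i => actPerm i) := by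
  intro i j
  by_cases h : i = j
  · subst h
    have : (Mat L).M i i = 1 := by simp [Mat]
    rw [this, pow_one]
    ext l
    exact (actFun_involutive i) l
  · have : (Mat L).M i j = 0 := by simp [Mat, h]
    rw [this, pow_zero]

/-- The homomorphism from the universal Coxeter group to permutations of normal forms. -/
def nfHom (L : ℕ) : W L →* Equiv.Perm (NFS L) := (cs L).lift ⟨fun i => actPerm i, actPerm_liftable⟩

/-- The normal form of an element. -/
def nf (w : W L) : List (Fin L) := (nfHom L w ⟨[], List.isChain_nil⟩).1

lemma nf_chain' (w : W L) : (nf w).Chain' (· ≠ ·) := (nfHom L w ⟨[], List.isChain_nil⟩).2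

lemma nf_wordProd (l : List (Fin L)) (hl : l.Chain' (· ≠ ·)) :
    nf ((cs L).wordProd l) = l := by
  induction l with
  | nil => simp [nf, CoxeterSystem.wordProd_nil]; rfl
  | cons a t ih =>
    have ht : t.Chain' (· ≠ ·) := hl.tail
    have hhd : t.head? ≠ some a := by
      cases t with
      | nil => simp
      | cons b t' =>
        have : a ≠ b := (List.isChain_cons_cons.1 hl).1
        simpa using fun hba => this hba.symm
    have hsimp : nfHom L ((cs L).simple a) = actPerm a :=
      CoxeterSystem.lift_apply_simple (cs L) actPerm_liftable a
    have : nfHom L ((cs L).wordProd (a :: t)) ⟨[], List.isChain_nil⟩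
        = actPerm a (nfHom L ((cs L).wordProd t) ⟨[], List.isChain_nil⟩) := by
      rw [CoxeterSystem.wordProd_cons, map_mul, hsimp]
      rfl
    have ht' : nfHom L ((cs L).wordProd t) ⟨[], List.isChain_nil⟩ = ⟨t, ht⟩ :=
      Subtype.ext (ih ht)
    unfold nf
    rw [this, ht']
    show (actFun a ⟨t, ht⟩).1 = a :: t
    simp [actFun, hhd]

lemma nf_simple (i : Fin L) : nf (σ i) = [i] := by
  have := nf_wordProd [i] (List.isChain_singleton i)
  simpa [σ, CoxeterSystem.wordProd_singleton] using this

lemma σ_injective : Function.Injective (σ : Fin L → W L) := by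
  intro i j hij
  have := nf_simple (L := L) i
  rw [hij, nf_simple] at this
  simpa using this.symm

lemma shorten (l : List (Fin L)) (hl : ¬ l.Chain' (· ≠ ·)) :
    ∃ l' : List (Fin L), l'.length + 2 = l.length ∧ (cs L).wordProd l' = (cs L).wordProd l := by
  induction l with
  | nil => exact absurd List.isChain_nil hl
  | cons a t ih =>
    cases t with
    | nil => exact absurd (List.isChain_singleton a) hl
    | cons b t' =>
      by_cases hab : a = b
      · subst hab
        refine ⟨t', by simp, ?_⟩
        rw [CoxeterSystem.wordProd_cons, CoxeterSystem.wordProd_cons,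
          CoxeterSystem.simple_mul_simple_cancel_left]
      · have hbt : ¬ (b :: t').Chain' (· ≠ ·) := by
          intro hc
          exact hl (List.isChain_cons_cons.2 ⟨hab, hc⟩)
        obtain ⟨l'', hlen, hprod⟩ := ih hbt
        refine ⟨a :: l'', by simpa using hlen, ?_⟩
        rw [CoxeterSystem.wordProd_cons, CoxeterSystem.wordProd_cons, hprod]

lemma exists_chain'_reduced (w : W L) :
    ∃ l : List (Fin L), l.Chain' (· ≠ ·) ∧ l.length = len w ∧ w = (cs L).wordProd l := by
  obtain ⟨l, hlen, hw⟩ := (cs L).exists_reduced_word w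
  have hlen2 : l.length = len w := by rw [hw]; exact hlen.symm
  refine ⟨l, ?_, hlen2, hw⟩
  by_contra hc
  obtain ⟨l', hlen', hprod⟩ := shorten l hc
  have : len w ≤ l'.length := by
    rw [hw]
    rw [← hprod]
    exact (cs L).length_wordProd_le l'
  omega

lemma nf_spec (w : W L) : (cs L).wordProd (nf w) = w ∧ (nf w).length = len w := by
  obtain ⟨l, hc, hlen, hw⟩ := exists_chain'_reduced w
  have : nf w = l := by rw [hw, nf_wordProd l hc]
  rw [this, ← hw]
  exact ⟨rfl, hlen⟩

lemma len_wordProd_chain' (l : List (Fin L)) (hl : l.Chain' (· ≠ ·)) :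
    len ((cs L).wordProd l) = l.length := by
  have := (nf_spec ((cs L).wordProd l)).2
  rw [nf_wordProd l hl] at this
  exact this.symm

lemma nf_eq_nil_iff (w : W L) : nf w = [] ↔ w = 1 := by
  constructor
  · intro h
    have := (nf_spec w).1
    rw [h] at this
    simpa [CoxeterSystem.wordProd_nil] using this.symm
  · intro h
    subst h
    have : len (1 : W L) = 0 := (cs L).length_one
    have h2 := (nf_spec (1 : W L)).2
    rw [this] at h2
    exact List.length_eq_zero_iff.1 h2

/-- Characterization of left descents by normal-form heads. -/
lemma descent_iff_head (w : W L) (i : Fin L) :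
    len (σ i * w) < len w ↔ (nf w).head? = some i := by
  constructor
  · intro hlt
    rcases hnf : nf w with _ | ⟨a, t⟩
    · have : w = 1 := (nf_eq_nil_iff w).1 hnf
      subst this
      simp [len, (cs L).length_one] at hlt
    · by_contra hne
      have hai : a ≠ i := by
        intro h
        exact hne (by simp [h])
      have hchain : (i :: a :: t).Chain' (· ≠ ·) := by
        refine List.isChain_cons_cons.2 ⟨fun h => hai h.symm, ?_⟩
        have := nf_chain' w
        rwa [hnf] at this
      have hw : w = (cs L).wordProd (a :: t) := by
        have := (nf_spec w).1
        rw [hnf] at this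
        exact this.symm
      have hsw : σ i * w = (cs L).wordProd (i :: a :: t) := by
        rw [CoxeterSystem.wordProd_cons, ← hw]
        rfl
      have h1 : len (σ i * w) = t.length + 2 := by
        rw [hsw, len_wordProd_chain' _ hchain]
        simp
      have h2 : len w = t.length + 1 := by
        have := (nf_spec w).2
        rw [hnf] at this
        simpa using this.symm
      omega
  · intro hhd
    rcases hnf : nf w with _ | ⟨a, t⟩
    · rw [hnf] at hhd; simp at hhd
    · rw [hnf] at hhd
      have hai : a = i := by simpa using hhd
      subst hai
      have hw : w = (cs L).wordProd (a :: t) := by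
        have := (nf_spec w).1
        rw [hnf] at this
        exact this.symm
      have hchain : (a :: t).Chain' (· ≠ ·) := by
        have := nf_chain' w; rwa [hnf] at this
      have hsw : σ a * w = (cs L).wordProd t := by
        rw [hw, CoxeterSystem.wordProd_cons, ← mul_assoc]
        show σ a * σ a * _ = _
        rw [show σ a * σ a = 1 from (cs L).simple_mul_simple_self a, one_mul]
      have h1 : len (σ a * w) ≤ t.length := by
        rw [hsw]
        exact (cs L).length_wordProd_le t
      have h2 : len w = t.length + 1 := by
        have := (nf_spec w).2
        rw [hnf] at this
        simpa using this.symm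
      omega

lemma descent_unique {w : W L} {i j : Fin L}
    (hi : len (σ i * w) < len w) (hj : len (σ j * w) < len w) : i = j := by
  rw [descent_iff_head] at hi hj
  rw [hi] at hj
  exact Option.some_injective _ hj

/-- Spheres in `W L` are finite. -/
lemma sphere_finite (n : ℕ) : Set.Finite {w : W L | len w = n} := by
  have hfin : Set.Finite {l : List (Fin L) | l.length = n} := List.finite_length_eq _ n
  apply Set.Finite.of_finite_image (f := nf) ?_ ?_
  · apply hfin.subset
    rintro _ ⟨w, hw, rfl⟩
    simp only [Set.mem_setOf_eq] at hw ⊢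
    rw [(nf_spec w).2, hw]
  · intro x _ y _ hxy
    have hx := (nf_spec x).1
    have hy := (nf_spec y).1
    rw [← hx, ← hy, hxy]

noncomputable instance sphFintype (L n : ℕ) : Fintype {w : W L // len w = n} :=
  Set.Finite.fintype (sphere_finite n)

/-! ### Length wrappers -/

lemma len_one : len (1 : W L) = 0 := (cs L).length_one

lemma len_simple (i : Fin L) : len (σ i) = 1 := (cs L).length_simple i

lemma len_mul_le (u v : W L) : len (u * v) ≤ len u + len v := (cs L).length_mul_le u v

lemma len_mul_mod_two (u v : W L) : len (u * v) % 2 = (len u + len v) % 2 :=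
  (cs L).length_mul_mod_two u v

lemma len_simple_mul (w : W L) (i : Fin L) :
    len (σ i * w) = len w + 1 ∨ len (σ i * w) + 1 = len w := (cs L).length_simple_mul w i

lemma len_mul_simple (w : W L) (i : Fin L) :
    len (w * σ i) = len w + 1 ∨ len (w * σ i) + 1 = len w := (cs L).length_mul_simple w i

lemma exists_rdescent {w : W L} (hw : w ≠ 1) : ∃ i : Fin L, len (w * σ i) < len w :=
  (cs L).exists_rightDescent_of_ne_one hw

lemma σ_cancel_left (i : Fin L) (w : W L) : σ i * (σ i * w) = w :=
  (cs L).simple_mul_simple_cancel_left i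

lemma len_eq_zero_iff {w : W L} : len w = 0 ↔ w = 1 := (cs L).length_eq_zero_iff

lemma len_eq_one_iff {w : W L} : len w = 1 ↔ ∃ i : Fin L, w = σ i := (cs L).length_eq_one_iff

/-! ### The subspaces spanned by short basis vectors -/

def Vlt (L k : ℕ) : Submodule ℂ (H L) :=
  Submodule.span ℂ {x : H L | ∃ w : W L, len w < k ∧ x = δ w}

lemma δ_mem_Vlt {k : ℕ} {w : W L} (h : len w < k) : δ w ∈ Vlt L k :=
  Submodule.subset_span ⟨w, h, rfl⟩

lemma inner_δ (v w : W L) [Decidable (v = w)] : ⟪δ v, δ w⟫ = if v = w then (1 : ℂ) else 0 := by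
  letI := Classical.decEq (W L)
  rw [δ, δ, lp.inner_single_left]
  by_cases h : v = w
  · subst h
    rw [lp.single_apply_self]
    simp
  · rw [lp.single_apply_ne 2 w 1 h]
    simp [h]

end UCoxMasa


namespace UCoxMasa

set_option maxHeartbeats 2000000 in
theorem statement8
    (L : ℕ) (hL : 3 ≤ L) (q p : ℝ) (hq : 0 < q) (hq1 : q ≤ 1)
    (hp : p = (q - 1) / Real.sqrt q)
    (T : Fin L → H L →L[ℂ] H L)
    (hT : ∀ (s : Fin L) (w : W L),
      T s (δ w) =
        if len (σ s * w) < len w then δ (σ s * w) + (p : ℂ) • δ w else δ (σ s * w))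
    (h : H L →L[ℂ] H L) (hh : h = ∑ s, T s)
    (Tr : Fin L → H L →L[ℂ] H L)
    (hTr : ∀ (s : Fin L) (w : W L),
      Tr s (δ w) =
        if len (w * σ s) < len w then δ (w * σ s) + (p : ℂ) • δ w else δ (w * σ s))
    (Rh : H L →L[ℂ] H L) (hRh : Rh = ∑ s, Tr s)
    (Twr : W L → H L →L[ℂ] H L) (hTwr1 : Twr 1 = 1)
    (hTwrrec : ∀ (s : Fin L) (w : W L), len (w * σ s) < len w →
      Twr w = Tr s ∘L Twr (w * σ s))
    (hnr : ℕ → H L →L[ℂ] H L)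
    (hhnr : ∀ n : ℕ, hnr n = ∑' w : {w : W L // len w = n}, Twr (w : W L))
    (Q : ℕ → H L →L[ℂ] H L)
    (hQ : ∀ (l : ℕ) (w : W L), Q l (δ w) = if len w = l then δ w else 0)
    (β : H L)
    (hβmem : β ∈ V L 1)
    (hβperp : ∀ y ∈ Sl L Q h Rh 1, ⟪β, y⟫ = 0)
    (n : ℕ) (hn1 : 1 ≤ n) :
    Q n (h (Q (n + 1) (hnr n β))) = - Q n (hnr (n - 1) β) := by
  classical
  haveI : Inhabited (Fin L) := ⟨⟨0, by omega⟩⟩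
  -- Extract coefficients of β
  have hβ' : ∃ c : Fin L → ℂ, ∑ i, c i • δ (σ i) = β := by
    have hset : {x : H L | ∃ w : W L, len w = 1 ∧ x = δ w}
        = Set.range (fun i : Fin L => δ (σ i)) := by
      ext x
      constructor
      · rintro ⟨w, hw, rfl⟩
        obtain ⟨i, rfl⟩ := len_eq_one_iff.1 hw
        exact ⟨i, rfl⟩
      · rintro ⟨i, rfl⟩
        exact ⟨σ i, len_simple i, rfl⟩
    rw [V, hset] at hβmem
    exact (Submodule.mem_span_range_iff_exists_fun ℂ).1 hβmem
  obtain ⟨c, hc⟩ := hβ'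
  -- The descent letter
  set d : W L → Fin L := fun w => (nf w).headI with hd_def
  have hdesc_iff : ∀ w : W L, w ≠ 1 → ∀ i : Fin L, (len (σ i * w) < len w ↔ i = d w) := by
    intro w hw i
    have hnfne : nf w ≠ [] := fun hnil => hw ((nf_eq_nil_iff w).1 hnil)
    rw [descent_iff_head]
    rcases hnf : nf w with _ | ⟨a, t⟩
    · exact absurd hnf hnfne
    · simp [hd_def, hnf, eq_comm]
  have hdesc_self : ∀ w : W L, w ≠ 1 → len (σ (d w) * w) < len w := fun w hw =>
    (hdesc_iff w hw (d w)).2 rfl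
  -- Q kills Vlt
  have QVlt : ∀ k l : ℕ, k ≤ l → ∀ x ∈ Vlt L k, Q l x = 0 := by
    intro k l hkl x hx
    have hle : Vlt L k ≤ LinearMap.ker (Q l : H L →ₗ[ℂ] H L) := by
      rw [Vlt, Submodule.span_le]
      rintro _ ⟨w, hw, rfl⟩
      simp only [SetLike.mem_coe, LinearMap.mem_ker, ContinuousLinearMap.coe_coe]
      rw [hQ]
      rw [if_neg (by omega)]
    exact hle hx
  -- Tr raises Vlt by at most one
  have TrVlt : ∀ (s : Fin L) (k : ℕ), ∀ x ∈ Vlt L k, Tr s x ∈ Vlt L (k + 1) := by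
    intro s k x hx
    have hle : Vlt L k ≤ Submodule.comap ((Tr s : H L →L[ℂ] H L) : H L →ₗ[ℂ] H L)
        (Vlt L (k + 1)) := by
      rw [Vlt, Submodule.span_le]
      rintro _ ⟨w, hw, rfl⟩
      simp only [SetLike.mem_coe, Submodule.mem_comap, ContinuousLinearMap.coe_coe]
      rw [hTr]
      have hws : len (w * σ s) < k + 1 := by
        have := len_mul_le w (σ s)
        rw [len_simple] at this
        omega
      by_cases hdw : len (w * σ s) < len w
      · rw [if_pos hdw]
        exact Submodule.add_mem _ (δ_mem_Vlt hws)
          (Submodule.smul_mem _ _ (δ_mem_Vlt (by omega)))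
      · rw [if_neg hdw]
        exact δ_mem_Vlt hws
    exact hle hx
  -- Main structural lemma for Twr
  have lemB : ∀ (m : ℕ) (w : W L), len w = m → ∀ u : W L,
      Twr w (δ u) - (if len (u * w) = len u + m then δ (u * w) else 0)
        ∈ Vlt L (len u + m) := by
    intro m
    induction m with
    | zero =>
      intro w hw u
      have hw1 : w = 1 := len_eq_zero_iff.1 hw
      subst hw1
      rw [hTwr1]
      have hcond : len (u * 1) = len u + 0 := by rw [mul_one, Nat.add_zero]
      rw [if_pos hcond]
      simp only [ContinuousLinearMap.one_apply, mul_one, sub_self]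
      exact Submodule.zero_mem _
    | succ m ih =>
      intro w hw u
      have hw1 : w ≠ 1 := by
        intro h1
        rw [h1, len_one] at hw
        omega
      obtain ⟨s, hs⟩ := exists_rdescent hw1
      have hrec := hTwrrec s w hs
      have hws : (w * σ s) * σ s = w := (cs L).simple_mul_simple_cancel_right s
      have hlw' : len (w * σ s) = m := by
        rcases len_mul_simple w s with hh | hh
        · omega
        · omega
      have hIH := ih (w * σ s) hlw' u
      rw [hrec, ContinuousLinearMap.comp_apply]
      set E' : H L := (if len (u * (w * σ s)) = len u + m then δ (u * (w * σ s)) else 0)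
        with hE'_def
      have hsplit : Tr s (Twr (w * σ s) (δ u))
          = Tr s (Twr (w * σ s) (δ u) - E') + Tr s E' := by
        rw [← map_add, sub_add_cancel]
      rw [hsplit]
      have hmem1 : Tr s (Twr (w * σ s) (δ u) - E') ∈ Vlt L (len u + (m + 1)) :=
        TrVlt s (len u + m) _ hIH
      have hgoal2 : Tr s E' - (if len (u * w) = len u + (m + 1) then δ (u * w) else 0)
          ∈ Vlt L (len u + (m + 1)) := by
        have huw : (u * (w * σ s)) * σ s = u * w := by
          rw [mul_assoc, mul_assoc]
          rw [show (σ s : W L) * σ s = 1 from (cs L).simple_mul_simple_self s, mul_one]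
        by_cases hcond' : len (u * (w * σ s)) = len u + m
        · have hE' : E' = δ (u * (w * σ s)) := if_pos hcond'
          rw [hE', hTr]
          by_cases hd2 : len ((u * (w * σ s)) * σ s) < len (u * (w * σ s))
          · rw [if_pos hd2]
            have hlenuw : len (u * w) < len u + m := by
              rw [← huw]
              omega
            rw [if_neg (by omega)]
            rw [sub_zero, huw]
            exact Submodule.add_mem _ (δ_mem_Vlt (by omega))
              (Submodule.smul_mem _ _ (δ_mem_Vlt (by omega)))
          · rw [if_neg hd2]
            have h3 : len ((u * (w * σ s)) * σ s) = len (u * (w * σ s)) + 1 := by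
              rcases len_mul_simple (u * (w * σ s)) s with hh | hh
              · exact hh
              · omega
            have hlen : len (u * w) = len u + (m + 1) := by
              rw [← huw]
              omega
            rw [if_pos hlen, huw, sub_self]
            exact Submodule.zero_mem _
        · have hE' : E' = 0 := if_neg hcond'
          have hlt : len (u * (w * σ s)) < len u + m := by
            have := len_mul_le u (w * σ s)
            rw [hlw'] at this
            omega
          have hpar : len (u * (w * σ s)) % 2 = (len u + m) % 2 := by
            have := len_mul_mod_two u (w * σ s)
            rw [hlw'] at this
            exact this
          have h3 : len (u * w) ≤ len (u * (w * σ s)) + 1 := by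
            rw [← huw]
            rcases len_mul_simple (u * (w * σ s)) s with hh | hh <;> omega
          rw [hE', map_zero, if_neg (by omega), sub_zero]
          exact Submodule.zero_mem _
      have hre : Tr s (Twr (w * σ s) (δ u) - E') + Tr s E'
            - (if len (u * w) = len u + (m + 1) then δ (u * w) else 0)
          = Tr s (Twr (w * σ s) (δ u) - E')
            + (Tr s E' - (if len (u * w) = len u + (m + 1) then δ (u * w) else 0)) := by
        abel
      rw [hre]
      exact Submodule.add_mem _ hmem1 hgoal2
  -- Projection of Twr applied to a basis vector
  have lemC : ∀ (w u : W L) (l : ℕ), l = len u + len w →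
      Q l (Twr w (δ u)) = if len (u * w) = l then δ (u * w) else 0 := by
    intro w u l hl
    subst hl
    have hB := lemB (len w) w rfl u
    have h0 : Q (len u + len w) (Twr w (δ u)
        - (if len (u * w) = len u + len w then δ (u * w) else 0)) = 0 :=
      QVlt _ _ le_rfl _ hB
    rw [map_sub] at h0
    have h1 := sub_eq_zero.1 h0
    rw [h1]
    by_cases hcond : len (u * w) = len u + len w
    · rw [if_pos hcond, hQ, if_pos hcond]
    · rw [if_neg hcond, map_zero]
  -- The coefficients sum to zero
  have hsum0 : ∑ i, c i = 0 := by
    have hy : (∑ i, δ (σ i) : H L) ∈ Sl L Q h Rh 1 := by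
      apply Submodule.subset_span
      left
      refine ⟨δ (1 : W L), ?_, ?_⟩
      · exact Submodule.subset_span ⟨1, len_one, rfl⟩
      · rw [hh, ContinuousLinearMap.sum_apply, map_sum]
        refine (Finset.sum_congr rfl fun s _ => ?_).symm
        rw [hT]
        have hns : ¬ len (σ s * 1) < len (1 : W L) := by
          rw [mul_one, len_simple, len_one]
          omega
        rw [if_neg hns, mul_one, hQ, if_pos (len_simple s)]
    have h0 := hβperp _ hy
    rw [← hc, inner_sum] at h0
    have hterm : ∀ j : Fin L,
        ⟪(∑ i, c i • δ (σ i) : H L), δ (σ j)⟫ = (starRingEnd ℂ) (c j) := by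
      intro j
      rw [sum_inner]
      rw [Finset.sum_eq_single j]
      · rw [inner_smul_left, inner_δ, if_pos rfl, mul_one]
      · intro i _ hij
        rw [inner_smul_left, inner_δ, if_neg (fun hh' => hij (σ_injective hh')), mul_zero]
      · intro hj
        exact absurd (Finset.mem_univ j) hj
    rw [Finset.sum_congr rfl (fun j _ => hterm j)] at h0
    rw [← map_sum] at h0
    have := congrArg (starRingEnd ℂ) h0
    rwa [Complex.conj_conj, map_zero] at this
  -- Projection of h applied to a basis vector with a descent
  have hQh : ∀ (x : W L) (j : Fin L) (m : ℕ), len x = m + 1 → len (σ j * x) < len x →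
      Q m (h (δ x)) = δ (σ j * x) := by
    intro x j m hm hdesc
    rw [hh, ContinuousLinearMap.sum_apply, map_sum]
    have hterm : ∀ s : Fin L, Q m (T s (δ x)) = if s = j then δ (σ j * x) else 0 := by
      intro s
      rw [hT s x]
      by_cases hs : len (σ s * x) < len x
      · have hsj : s = j := descent_unique hs hdesc
        subst hsj
        have h1 : len (σ s * x) = m := by
          rcases len_simple_mul x s with hh' | hh'
          · omega
          · omega
        rw [if_pos rfl, if_pos hs, map_add, map_smul, hQ, hQ, if_pos h1,
          if_neg (show ¬ len x = m by omega)]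
        simp
      · have hsj : s ≠ j := fun hh' => hs (hh' ▸ hdesc)
        have h1 : len (σ s * x) = len x + 1 := by
          rcases len_simple_mul x s with hh' | hh'
          · exact hh'
          · omega
        rw [if_neg hsj, if_neg hs, hQ, if_neg (show ¬ len (σ s * x) = m by omega)]
    rw [Finset.sum_congr rfl (fun s _ => hterm s)]
    rw [Finset.sum_ite_eq' Finset.univ j (fun _ => δ (σ j * x))]
    rw [if_pos (Finset.mem_univ j)]
  -- Computation of the projections of hnr applied to β
  have hA : ∀ (k l : ℕ), l = k + 1 → Q l (hnr k β)
      = ∑ w : {w : W L // len w = k}, ∑ i : Fin L,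
          c i • (if len (σ i * w.1) = l then δ (σ i * w.1) else 0) := by
    intro k l hl
    rw [hhnr k, tsum_fintype, ContinuousLinearMap.sum_apply, map_sum]
    refine Finset.sum_congr rfl fun w _ => ?_
    rw [← hc, map_sum, map_sum]
    refine Finset.sum_congr rfl fun i _ => ?_
    rw [map_smul, map_smul]
    congr 1
    exact lemC w.1 (σ i) l (by rw [len_simple, w.2]; omega)
  -- The left-hand side
  have hLHS : Q n (h (Q (n + 1) (hnr n β)))
      = -∑ w : {w : W L // len w = n}, c (d w.1) • δ w.1 := by
    rw [hA n (n + 1) rfl]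
    simp only [map_sum, map_smul]
    have hterm : ∀ (w : {w : W L // len w = n}) (i : Fin L),
        Q n (h (if len (σ i * w.1) = n + 1 then δ (σ i * w.1) else 0))
          = if len (σ i * w.1) = n + 1 then δ w.1 else 0 := by
      intro w i
      by_cases hcond : len (σ i * w.1) = n + 1
      · rw [if_pos hcond, if_pos hcond]
        have hx : len (σ i * (σ i * w.1)) < len (σ i * w.1) := by
          rw [σ_cancel_left, w.2, hcond]
          omega
        have := hQh (σ i * w.1) i n hcond hx
        rw [this, σ_cancel_left]
      · rw [if_neg hcond, if_neg hcond, map_zero, map_zero]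
    rw [Finset.sum_congr rfl fun w _ =>
      Finset.sum_congr rfl fun i _ => by rw [hterm w i]]
    have hinner : ∀ w : {w : W L // len w = n},
        ∑ i : Fin L, c i • (if len (σ i * w.1) = n + 1 then δ w.1 else 0)
          = -(c (d w.1) • δ w.1) := by
      intro w
      have hwne : w.1 ≠ 1 := by
        intro h1
        have hl := w.2
        rw [h1, len_one] at hl
        omega
      have hcondiff : ∀ i : Fin L, (len (σ i * w.1) = n + 1) ↔ i ≠ d w.1 := by
        intro i
        constructor
        · intro hE hid
          have hlt := (hdesc_iff w.1 hwne i).2 hid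
          have hl := w.2
          omega
        · intro hid
          have hnd : ¬ len (σ i * w.1) < len w.1 :=
            fun hlt => hid ((hdesc_iff w.1 hwne i).1 hlt)
          rcases len_simple_mul w.1 i with hh' | hh'
          · rw [hh', w.2]
          · omega
      calc ∑ i : Fin L, c i • (if len (σ i * w.1) = n + 1 then δ w.1 else 0)
          = ∑ i : Fin L, ((c i • δ w.1) - if i = d w.1 then c i • δ w.1 else 0) := by
            refine Finset.sum_congr rfl fun i _ => ?_
            by_cases hid : i = d w.1
            · rw [if_pos hid, if_neg (fun hE => ((hcondiff i).1 hE) hid)]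
              simp
            · rw [if_pos ((hcondiff i).2 hid), if_neg hid, sub_zero]
        _ = (∑ i, c i) • δ w.1 - c (d w.1) • δ w.1 := by
            rw [Finset.sum_sub_distrib, ← Finset.sum_smul,
              Finset.sum_ite_eq' Finset.univ (d w.1) (fun i => c i • δ w.1),
              if_pos (Finset.mem_univ _)]
        _ = -(c (d w.1) • δ w.1) := by
            rw [hsum0, zero_smul, zero_sub]
    rw [Finset.sum_congr rfl fun w _ => hinner w]
    rw [Finset.sum_neg_distrib]
  -- The right-hand side
  have hkey1 : ∀ (w' : W L) (i : Fin L), len w' = n - 1 → len (σ i * w') = n →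
      d (σ i * w') = i := by
    intro w' i hw' hsw
    have hne : σ i * w' ≠ 1 := by
      intro h1
      rw [h1, len_one] at hsw
      omega
    have hdes : len (σ i * (σ i * w')) < len (σ i * w') := by
      rw [σ_cancel_left, hw', hsw]
      omega
    exact ((hdesc_iff _ hne i).1 hdes).symm
  have hkey2 : ∀ w : W L, len w = n → len (σ (d w) * w) = n - 1 := by
    intro w hw
    have hne : w ≠ 1 := by
      intro h1
      rw [h1, len_one] at hw
      omega
    have hds := hdesc_self w hne
    rcases len_simple_mul w (d w) with hh' | hh'
    · omega
    · omega
  have hRHS : Q n (hnr (n - 1) β)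
      = ∑ w : {w : W L // len w = n}, c (d w.1) • δ w.1 := by
    rw [hA (n - 1) n (by omega)]
    rw [← Fintype.sum_prod_type']
    have hstep : ∀ p : {w : W L // len w = n - 1} × Fin L,
        c p.2 • (if len (σ p.2 * p.1.1) = n then δ (σ p.2 * p.1.1) else 0)
          = if len (σ p.2 * p.1.1) = n then c p.2 • δ (σ p.2 * p.1.1) else 0 := by
      intro p
      rw [smul_ite, smul_zero]
    rw [Finset.sum_congr rfl fun p _ => hstep p]
    rw [← Finset.sum_filter]
    refine Finset.sum_bij'
      (fun p hp => (⟨σ p.2 * p.1.1, (Finset.mem_filter.1 hp).2⟩ : {w : W L // len w = n}))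
      (fun w _ => ((⟨σ (d w.1) * w.1, hkey2 w.1 w.2⟩ : {w : W L // len w = n - 1}), d w.1))
      ?_ ?_ ?_ ?_ ?_
    · intro p hp
      exact Finset.mem_univ _
    · intro w _
      refine Finset.mem_filter.2 ⟨Finset.mem_univ _, ?_⟩
      show len (σ (d w.1) * (σ (d w.1) * w.1)) = n
      rw [σ_cancel_left, w.2]
    · intro p hp
      have hcond := (Finset.mem_filter.1 hp).2
      have hd1 : d (σ p.2 * p.1.1) = p.2 := hkey1 p.1.1 p.2 p.1.2 hcond
      refine Prod.ext ?_ ?_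
      · apply Subtype.ext
        show σ (d (σ p.2 * p.1.1)) * (σ p.2 * p.1.1) = p.1.1
        rw [hd1, σ_cancel_left]
      · exact hd1
    · intro w _
      apply Subtype.ext
      show σ (d w.1) * (σ (d w.1) * w.1) = w.1
      rw [σ_cancel_left]
    · intro p hp
      have hcond := (Finset.mem_filter.1 hp).2
      have hd1 : d (σ p.2 * p.1.1) = p.2 := hkey1 p.1.1 p.2 p.1.2 hcond
      show c p.2 • δ (σ p.2 * p.1.1)
        = c (d (σ p.2 * p.1.1)) • δ (σ p.2 * p.1.1)
      rw [hd1]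
  rw [hLHS, hRHS]


end UCoxMasa
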